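/- Integration by parts for bounded variation functions: if F and G are of bounded variation on [a, b] with −∞ < a < b < ∞, and at least one of F, G is continuous, then ∫_{(a,b]} F dG + ∫_{(a,b]} G dF = F(b)G(b) − F(a)G(a). -/

import Mathlib

open MeasureTheory

open Set Filter Function

lemma mono_integrableOn (h : ℝ → ℝ) (hm : Monotone h) (f : StieltjesFunction ℝ) (a b : ℝ) :
    IntegrableOn h (Set.Ioc a b) f.measure := by
  have hfin : f.measure (Set.Ioc a b) < ⊤ := by
    rw [StieltjesFunction.measure_Ioc]; exact ENNReal.ofReal_lt_top
  haveI : IsFiniteMeasure (f.measure.restrict (Set.Ioc a b)) :=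
    ⟨by rwa [Measure.restrict_apply_univ]⟩
  refine Integrable.mono' (integrable_const (max |h a| |h b|))
    hm.measurable.aestronglyMeasurable ?_
  refine ae_restrict_of_forall_mem measurableSet_Ioc fun x hx => ?_
  rw [Real.norm_eq_abs, abs_le]
  have h1 : h a ≤ h x := hm hx.1.le
  have h2 : h x ≤ h b := hm hx.2
  constructor
  · calc -(max |h a| |h b|) ≤ -|h a| := neg_le_neg (le_max_left _ _)
      _ ≤ h a := neg_abs_le _
      _ ≤ h x := h1
  · calc h x ≤ h b := h2
      _ ≤ |h b| := le_abs_self _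
      _ ≤ max |h a| |h b| := le_max_right _ _

lemma key_lintegral (f g : StieltjesFunction ℝ) {a b : ℝ} (hab : a ≤ b) :
    (∫⁻ x in Set.Ioc a b, ENNReal.ofReal (g x - g a) ∂f.measure)
      + ∫⁻ y in Set.Ioc a b, ENNReal.ofReal (leftLim f y - f a) ∂g.measure
      = ENNReal.ofReal (f b - f a) * ENNReal.ofReal (g b - g a) := by
  set μ := f.measure
  set ν := g.measure
  set S : Set (ℝ × ℝ) := Ioc a b ×ˢ Ioc a b with hS
  set A : Set (ℝ × ℝ) := S ∩ {p | p.2 ≤ p.1} with hA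
  set B : Set (ℝ × ℝ) := S ∩ {p | p.1 < p.2} with hB
  have hSm : MeasurableSet S := (measurableSet_Ioc).prod measurableSet_Ioc
  have hAm : MeasurableSet A := hSm.inter (measurableSet_le measurable_snd measurable_fst)
  have hBm : MeasurableSet B := hSm.inter (measurableSet_lt measurable_fst measurable_snd)
  have hdisj : Disjoint A B := by
    refine Set.disjoint_left.2 ?_
    rintro ⟨x, y⟩ ⟨-, h1⟩ ⟨-, h2⟩
    simp only [Set.mem_setOf_eq] at h1 h2; exact absurd h1 (not_le.2 h2)
  have hunion : A ∪ B = S := by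
    ext ⟨x, y⟩
    simp only [hA, hB, Set.mem_union, Set.mem_inter_iff, Set.mem_setOf_eq]
    constructor
    · rintro (⟨h, -⟩ | ⟨h, -⟩) <;> exact h
    · intro h
      rcases le_or_gt y x with h' | h'
      · exact Or.inl ⟨h, h'⟩
      · exact Or.inr ⟨h, h'⟩
  have hAval : (μ.prod ν) A = ∫⁻ x in Set.Ioc a b, ENNReal.ofReal (g x - g a) ∂μ := by
    rw [Measure.prod_apply hAm]
    rw [← lintegral_indicator measurableSet_Ioc]
    congr 1
    ext x
    rcases em (x ∈ Ioc a b) with hx | hx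
    · have : Prod.mk x ⁻¹' A = Ioc a x := by
        ext y
        simp only [hA, hS, Set.mem_preimage, Set.mem_inter_iff, Set.mem_prod, Set.mem_setOf_eq,
          Set.mem_Ioc]
        constructor
        · rintro ⟨⟨-, hy⟩, hyx⟩; exact ⟨hy.1, hyx⟩
        · rintro ⟨h1, h2⟩; exact ⟨⟨hx, h1, h2.trans hx.2⟩, h2⟩
      rw [this, StieltjesFunction.measure_Ioc, Set.indicator_of_mem hx]
    · have : Prod.mk x ⁻¹' A = ∅ := by
        ext y
        simp only [hA, hS, Set.mem_preimage, Set.mem_inter_iff, Set.mem_prod, Set.mem_setOf_eq,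
          Set.mem_empty_iff_false, iff_false]
        rintro ⟨⟨hx', -⟩, -⟩; exact hx hx'
      rw [this, measure_empty, Set.indicator_of_notMem hx]
  have hBval : (μ.prod ν) B = ∫⁻ y in Set.Ioc a b, ENNReal.ofReal (leftLim f y - f a) ∂ν := by
    rw [Measure.prod_apply_symm hBm]
    rw [← lintegral_indicator measurableSet_Ioc]
    congr 1
    ext y
    rcases em (y ∈ Ioc a b) with hy | hy
    · have : (fun x => (x, y)) ⁻¹' B = Ioo a y := by
        ext x
        simp only [hB, hS, Set.mem_preimage, Set.mem_inter_iff, Set.mem_prod, Set.mem_setOf_eq,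
          Set.mem_Ioc, Set.mem_Ioo]
        constructor
        · rintro ⟨⟨hx, -⟩, hxy⟩; exact ⟨hx.1, hxy⟩
        · rintro ⟨h1, h2⟩; exact ⟨⟨⟨h1, h2.le.trans hy.2⟩, hy⟩, h2⟩
      rw [this, StieltjesFunction.measure_Ioo, Set.indicator_of_mem hy]
    · have : (fun x => (x, y)) ⁻¹' B = ∅ := by
        ext x
        simp only [hB, hS, Set.mem_preimage, Set.mem_inter_iff, Set.mem_prod, Set.mem_setOf_eq,
          Set.mem_empty_iff_false, iff_false]
        rintro ⟨⟨-, hy'⟩, -⟩; exact hy hy'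
      rw [this, measure_empty, Set.indicator_of_notMem hy]
  have : (μ.prod ν) A + (μ.prod ν) B = (μ.prod ν) S := by
    rw [← measure_union hdisj hBm, hunion]
  rw [hAval, hBval] at this
  rw [this, hS, Measure.prod_prod, StieltjesFunction.measure_Ioc, StieltjesFunction.measure_Ioc]

lemma key_real (f g : StieltjesFunction ℝ) {a b : ℝ} (hab : a ≤ b) :
    (∫ x in Set.Ioc a b, g x ∂f.measure) + ∫ y in Set.Ioc a b, leftLim f y ∂g.measure
      = f b * g b - f a * g a := by
  have hI1 : IntegrableOn (fun x => g x - g a) (Set.Ioc a b) f.measure :=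
    (mono_integrableOn g g.mono f a b).sub ((integrableOn_const_iff).2 (Or.inr (by
      rw [StieltjesFunction.measure_Ioc]; exact ENNReal.ofReal_lt_top)))
  have hI2 : IntegrableOn (fun y => leftLim f y - f a) (Set.Ioc a b) g.measure :=
    (mono_integrableOn (leftLim f) f.mono.leftLim g a b).sub ((integrableOn_const_iff).2 (Or.inr (by
      rw [StieltjesFunction.measure_Ioc]; exact ENNReal.ofReal_lt_top)))
  have hp1 : 0 ≤ᶠ[ae (f.measure.restrict (Set.Ioc a b))] fun x => g x - g a :=
    ae_restrict_of_forall_mem measurableSet_Ioc fun x hx => sub_nonneg.2 (g.mono hx.1.le)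
  have hp2 : 0 ≤ᶠ[ae (g.measure.restrict (Set.Ioc a b))] fun y => leftLim f y - f a :=
    ae_restrict_of_forall_mem measurableSet_Ioc fun y hy => sub_nonneg.2 (f.mono.le_leftLim hy.1)
  have h1 := ofReal_integral_eq_lintegral_ofReal hI1 hp1
  have h2 := ofReal_integral_eq_lintegral_ofReal hI2 hp2
  have hk := key_lintegral f g hab
  rw [← h1, ← h2, ← ENNReal.ofReal_add (integral_nonneg_of_ae hp1) (integral_nonneg_of_ae hp2),
    ← ENNReal.ofReal_mul (sub_nonneg.2 (f.mono hab))] at hk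
  have hsum : (∫ x in Set.Ioc a b, (g x - g a) ∂f.measure)
      + (∫ y in Set.Ioc a b, (leftLim f y - f a) ∂g.measure)
      = (f b - f a) * (g b - g a) := by
    rw [ENNReal.ofReal_eq_ofReal_iff
      (add_nonneg (integral_nonneg_of_ae hp1) (integral_nonneg_of_ae hp2))
      (mul_nonneg (sub_nonneg.2 (f.mono hab)) (sub_nonneg.2 (g.mono hab)))] at hk
    exact hk
  have e1 : (∫ x in Set.Ioc a b, (g x - g a) ∂f.measure)
      = (∫ x in Set.Ioc a b, g x ∂f.measure) - g a * (f b - f a) := by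
    rw [integral_sub (mono_integrableOn g g.mono f a b) ((integrableOn_const_iff).2 (Or.inr (by
      rw [StieltjesFunction.measure_Ioc]; exact ENNReal.ofReal_lt_top))),
      setIntegral_const, measureReal_def, StieltjesFunction.measure_Ioc,
      ENNReal.toReal_ofReal (sub_nonneg.2 (f.mono hab))]
    rw [smul_eq_mul]; ring
  have e2 : (∫ y in Set.Ioc a b, (leftLim f y - f a) ∂g.measure)
      = (∫ y in Set.Ioc a b, leftLim f y ∂g.measure) - f a * (g b - g a) := by
    rw [integral_sub (mono_integrableOn (leftLim f) f.mono.leftLim g a b)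
      ((integrableOn_const_iff).2 (Or.inr (by
        rw [StieltjesFunction.measure_Ioc]; exact ENNReal.ofReal_lt_top))),
      setIntegral_const, measureReal_def, StieltjesFunction.measure_Ioc,
      ENNReal.toReal_ofReal (sub_nonneg.2 (g.mono hab))]
    rw [smul_eq_mul]; ring
  rw [e1, e2] at hsum
  nlinarith [hsum]

-- helper: continuity of difference forces matching left-limits
lemma IBP_cont_atom (h₁ h₂ : StieltjesFunction ℝ) (H : ℝ → ℝ) (hH : ∀ x, H x = h₁ x - h₂ x)
    {a b y : ℝ} (hy : y ∈ Set.Ioc a b) (hc : ContinuousOn H (Set.Icc a b)) :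
    h₁ y - leftLim h₁ y = h₂ y - leftLim h₂ y := by
  have h1 : Tendsto H (nhdsWithin y (Set.Iio y)) (nhds (leftLim h₁ y - leftLim h₂ y)) := by
    have := (h₁.mono.tendsto_leftLim y).sub (h₂.mono.tendsto_leftLim y)
    exact this.congr fun x => (hH x).symm
  have h2 : Tendsto H (nhdsWithin y (Set.Iio y)) (nhds (H y)) := by
    have hyI : y ∈ Set.Icc a b := ⟨hy.1.le, hy.2⟩
    have hcy := hc y hyI
    rw [← nhdsWithin_Ioo_eq_nhdsLT hy.1]
    refine hcy.mono_left (nhdsWithin_mono _ ?_)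
    intro x hx
    exact ⟨hx.1.le.trans (le_refl x) |>.trans (le_refl x) |> fun _ => hx.1.le, hx.2.le.trans hy.2⟩
  have huniq := tendsto_nhds_unique h1 h2
  rw [hH y] at huniq
  linarith [huniq]

-- helper: equal atoms on Ioc implies equal measure of countable subsets
lemma IBP_countable_eq (g₁ g₂ : StieltjesFunction ℝ) {a b : ℝ}
    (hatoms : ∀ y ∈ Set.Ioc a b, g₁.measure {y} = g₂.measure {y})
    {E : Set ℝ} (hE : E.Countable) (hEsub : E ⊆ Set.Ioc a b) :
    g₁.measure E = g₂.measure E := by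
  have hd : E.PairwiseDisjoint (fun x => ({x} : Set ℝ)) := fun x _ y _ hxy => by
    simpa [Function.onFun] using hxy
  have hm : ∀ x ∈ E, MeasurableSet ({x} : Set ℝ) := fun x _ => measurableSet_singleton x
  rw [← Set.biUnion_of_singleton E, measure_biUnion hE hd hm, measure_biUnion hE hd hm]
  exact tsum_congr fun p => hatoms p (hEsub p.2)

theorem stmt_14 (a b : ℝ) (hab : a < b)
    (f₁ f₂ g₁ g₂ : StieltjesFunction ℝ) (F G : ℝ → ℝ)
    (hF : ∀ x, F x = f₁ x - f₂ x) (hG : ∀ x, G x = g₁ x - g₂ x)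
    (hFbv : BoundedVariationOn F (Set.Icc a b))
    (hGbv : BoundedVariationOn G (Set.Icc a b))
    (hcont : ContinuousOn F (Set.Icc a b) ∨ ContinuousOn G (Set.Icc a b)) :
    ((∫ x in Set.Ioc a b, F x ∂g₁.measure) - (∫ x in Set.Ioc a b, F x ∂g₂.measure))
      + ((∫ x in Set.Ioc a b, G x ∂f₁.measure) - (∫ x in Set.Ioc a b, G x ∂f₂.measure))
      = F b * G b - F a * G a := by
  have hab' : a ≤ b := hab.le
  -- split the integrals of F and G
  have hFsplit : ∀ g : StieltjesFunction ℝ, (∫ x in Set.Ioc a b, F x ∂g.measure)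
      = (∫ x in Set.Ioc a b, f₁ x ∂g.measure) - ∫ x in Set.Ioc a b, f₂ x ∂g.measure := by
    intro g
    rw [setIntegral_congr_fun measurableSet_Ioc (fun x _ => hF x),
      integral_sub (mono_integrableOn _ f₁.mono g a b) (mono_integrableOn _ f₂.mono g a b)]
  have hGsplit : ∀ f : StieltjesFunction ℝ, (∫ x in Set.Ioc a b, G x ∂f.measure)
      = (∫ x in Set.Ioc a b, g₁ x ∂f.measure) - ∫ x in Set.Ioc a b, g₂ x ∂f.measure := by
    intro f
    rw [setIntegral_congr_fun measurableSet_Ioc (fun x _ => hG x),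
      integral_sub (mono_integrableOn _ g₁.mono f a b) (mono_integrableOn _ g₂.mono f a b)]
  have k11 := key_real f₁ g₁ hab'
  have k12 := key_real f₁ g₂ hab'
  have k21 := key_real f₂ g₁ hab'
  have k22 := key_real f₂ g₂ hab'
  -- the residual term
  set D : ℝ → ℝ := fun y => (f₁ y - leftLim f₁ y) - (f₂ y - leftLim f₂ y) with hD
  have hDint : ∀ g : StieltjesFunction ℝ, IntegrableOn D (Set.Ioc a b) g.measure := fun g =>
    ((mono_integrableOn _ f₁.mono g a b).sub
      (mono_integrableOn _ f₁.mono.leftLim g a b)).sub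
      ((mono_integrableOn _ f₂.mono g a b).sub
        (mono_integrableOn _ f₂.mono.leftLim g a b))
  have hDsplit : ∀ g : StieltjesFunction ℝ, (∫ y in Set.Ioc a b, D y ∂g.measure)
      = ((∫ y in Set.Ioc a b, f₁ y ∂g.measure) - ∫ y in Set.Ioc a b, leftLim f₁ y ∂g.measure)
        - ((∫ y in Set.Ioc a b, f₂ y ∂g.measure)
          - ∫ y in Set.Ioc a b, leftLim f₂ y ∂g.measure) := by
    intro g
    have i1 : IntegrableOn (fun y => f₁ y - leftLim f₁ y) (Set.Ioc a b) g.measure :=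
      (mono_integrableOn _ f₁.mono g a b).sub (mono_integrableOn _ f₁.mono.leftLim g a b)
    have i2 : IntegrableOn (fun y => f₂ y - leftLim f₂ y) (Set.Ioc a b) g.measure :=
      (mono_integrableOn _ f₂.mono g a b).sub (mono_integrableOn _ f₂.mono.leftLim g a b)
    rw [hD]
    rw [integral_sub i1 i2,
      integral_sub (mono_integrableOn _ f₁.mono g a b) (mono_integrableOn _ f₁.mono.leftLim g a b),
      integral_sub (mono_integrableOn _ f₂.mono g a b) (mono_integrableOn _ f₂.mono.leftLim g a b)]
  have hres : (∫ y in Set.Ioc a b, D y ∂g₁.measure) = ∫ y in Set.Ioc a b, D y ∂g₂.measure := by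
    rcases hcont with hc | hc
    · have hz : ∀ g : StieltjesFunction ℝ, (∫ y in Set.Ioc a b, D y ∂g.measure) = 0 := by
        intro g
        rw [setIntegral_congr_fun measurableSet_Ioc (g := fun _ => (0 : ℝ))
          (fun y hy => by
            have := IBP_cont_atom f₁ f₂ F hF hy hc
            simp only [hD]
            linarith), integral_zero]
      rw [hz, hz]
    · -- G continuous: the two measures have the same atoms on Ioc a b
      have hatoms : ∀ y ∈ Set.Ioc a b, g₁.measure {y} = g₂.measure {y} := by
        intro y hy
        rw [StieltjesFunction.measure_singleton, StieltjesFunction.measure_singleton,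
          IBP_cont_atom g₁ g₂ G hG hy hc]
      set C : Set ℝ := Set.Ioc a b ∩ ({x | leftLim f₁ x ≠ f₁ x} ∪ {x | leftLim f₂ x ≠ f₂ x})
        with hC
      have hCc : C.Countable :=
        ((f₁.countable_leftLim_ne.union f₂.countable_leftLim_ne).mono Set.inter_subset_right)
      have hCm : MeasurableSet C := hCc.measurableSet
      have hzero : ∀ g : StieltjesFunction ℝ,
          (∫ y in Set.Ioc a b \ C, D y ∂g.measure) = 0 := by
        intro g
        rw [setIntegral_congr_fun (measurableSet_Ioc.diff hCm) (g := fun _ => (0 : ℝ))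
          (fun y hy => by
            have h1 : leftLim f₁ y = f₁ y := by
              by_contra h
              exact hy.2 ⟨hy.1, Or.inl h⟩
            have h2 : leftLim f₂ y = f₂ y := by
              by_contra h
              exact hy.2 ⟨hy.1, Or.inr h⟩
            simp only [hD]
            rw [h1, h2]
            ring), integral_zero]
      have hCsub : C ⊆ Set.Ioc a b := Set.inter_subset_left
      have hrestr : g₁.measure.restrict C = g₂.measure.restrict C := by
        refine Measure.ext fun s hs => ?_
        rw [Measure.restrict_apply hs, Measure.restrict_apply hs]
        exact IBP_countable_eq g₁ g₂ hatoms (hCc.mono Set.inter_subset_right)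
          ((Set.inter_subset_right).trans hCsub)
      have hIC : Set.Ioc a b ∩ C = C := Set.inter_eq_self_of_subset_right hCsub
      have key : ∀ g : StieltjesFunction ℝ, (∫ y in Set.Ioc a b, D y ∂g.measure)
          = ∫ y in C, D y ∂g.measure := by
        intro g
        rw [← integral_inter_add_diff hCm (hDint g), hzero, add_zero, hIC]
      rw [key, key, hrestr]
  -- final algebra
  rw [hFsplit, hFsplit, hGsplit, hGsplit, hDsplit, hDsplit] at *
  rw [hF a, hF b, hG a, hG b]
  linarith [hres, k11, k12, k21, k22]
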